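/- For 1/2 < α < 1, the sum ∑_{0 ≤ a < b, 0 ≤ c} C(a+c, a) α^{a+b+c} equals (1/(2α-1)) ∑_{b>0} ((α²/(1-α))^b − α^b); consequently this sum diverges if and only if α²/(1-α) ≥ 1, i.e., if and only if α ≥ (√5 − 1)/2. -/

import Mathlib

open ENNReal

set_option maxHeartbeats 1000000 in
/-- For `1/2 < α < 1`, the sum `∑_{0 ≤ a < b, 0 ≤ c} C(a+c, a) α^(a+b+c)`
(computed in `ℝ≥0∞`) equals `(1/(2α-1)) ∑_{b>0} ((α²/(1-α))^b − α^b)`;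
consequently it diverges if and only if `α²/(1-α) ≥ 1`, i.e. iff
`α ≥ (√5 − 1)/2`. -/
theorem lower_bound_sum_second_moment (α : ℝ) (h1 : 1 / 2 < α) (h2 : α < 1) :
    (∑' p : ℕ × ℕ × ℕ,
        if p.1 < p.2.1 then
          ((p.1 + p.2.2).choose p.1 : ℝ≥0∞) * (ENNReal.ofReal α) ^ (p.1 + p.2.1 + p.2.2)
        else 0)
      = ENNReal.ofReal (1 / (2 * α - 1)) *
          ∑' b : ℕ, ((ENNReal.ofReal (α ^ 2 / (1 - α))) ^ (b + 1)
            - (ENNReal.ofReal α) ^ (b + 1)) ∧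
    ((∑' p : ℕ × ℕ × ℕ,
        if p.1 < p.2.1 then
          ((p.1 + p.2.2).choose p.1 : ℝ≥0∞) * (ENNReal.ofReal α) ^ (p.1 + p.2.1 + p.2.2)
        else 0) = ⊤ ↔ (Real.sqrt 5 - 1) / 2 ≤ α) := by
  have hα0 : 0 < α := by linarith
  have h1α : 0 < 1 - α := by linarith
  have h2α : 0 < 2 * α - 1 := by linarith
  set x : ℝ≥0∞ := ENNReal.ofReal α with hxdef
  set q : ℝ≥0∞ := ENNReal.ofReal (α ^ 2 / (1 - α)) with hqdef
  have hβα : α ≤ α ^ 2 / (1 - α) := by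
    rw [le_div_iff₀ h1α]; nlinarith
  have hx1 : x < 1 := ENNReal.ofReal_lt_one.mpr h2
  -- real geometric identity
  have hreal : ∀ b : ℕ, (∑ a ∈ Finset.range b, α^(a+b) * (1/(1-α))^(a+1))
      = (1/(2*α-1)) * ((α^2/(1-α))^b - α^b) := by
    intro b
    have hr1 : α/(1-α) ≠ 1 := ((one_lt_div h1α).mpr (by linarith)).ne'
    have hterm : ∀ a, α^(a+b) * (1/(1-α))^(a+1) = (α^b * (1/(1-α))) * (α/(1-α))^a := by
      intro a; rw [pow_add, pow_succ, div_pow, div_pow]; ring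
    have hsub : α/(1-α) - 1 = (2*α-1)/(1-α) := by field_simp; ring
    rw [Finset.sum_congr rfl (fun a _ => hterm a), ← Finset.mul_sum, geom_sum_eq hr1,
      hsub, div_pow, div_pow]
    rw [div_div_eq_mul_div]
    field_simp
    ring
  -- inner c sum
  have hcsum : ∀ a b : ℕ, (∑' c : ℕ, ((a + c).choose a : ℝ≥0∞) * x ^ (a + b + c))
      = x ^ (a + b) * ENNReal.ofReal ((1/(1-α)) ^ (a + 1)) := by
    intro a b
    have hnorm : ‖α‖ < 1 := by rw [Real.norm_eq_abs, abs_of_pos hα0]; exact h2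
    have hs : Summable (fun c : ℕ => ((c + a).choose a : ℝ) * α ^ c) :=
      summable_choose_mul_geometric_of_norm_lt_one a hnorm
    have hts : ∑' c : ℕ, ((c + a).choose a : ℝ) * α ^ c = 1 / (1 - α) ^ (a + 1) :=
      tsum_choose_mul_geometric_of_norm_lt_one a hnorm
    calc (∑' c : ℕ, ((a + c).choose a : ℝ≥0∞) * x ^ (a + b + c))
        = ∑' c : ℕ, x ^ (a + b) * (((c + a).choose a : ℝ≥0∞) * x ^ c) := by
          refine tsum_congr (fun c => ?_)
          rw [pow_add x (a+b) c, Nat.add_comm a c]; ring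
      _ = x ^ (a + b) * ∑' c : ℕ, (((c + a).choose a : ℝ≥0∞) * x ^ c) :=
          ENNReal.tsum_mul_left
      _ = x ^ (a + b) * ∑' c : ℕ, ENNReal.ofReal (((c + a).choose a : ℝ) * α ^ c) := by
          congr 1
          refine tsum_congr (fun c => ?_)
          rw [ENNReal.ofReal_mul (by positivity), ENNReal.ofReal_pow hα0.le,
            ENNReal.ofReal_natCast]
      _ = x ^ (a + b) * ENNReal.ofReal ((1/(1-α)) ^ (a + 1)) := by
          rw [← ENNReal.ofReal_tsum_of_nonneg (fun c => by positivity) hs, hts,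
            one_div_pow, one_div]
  -- compute the full sum
  have key : (∑' p : ℕ × ℕ × ℕ,
        if p.1 < p.2.1 then
          ((p.1 + p.2.2).choose p.1 : ℝ≥0∞) * x ^ (p.1 + p.2.1 + p.2.2)
        else 0)
      = ENNReal.ofReal (1 / (2 * α - 1)) * ∑' b : ℕ, (q ^ (b + 1) - x ^ (b + 1)) := by
    calc (∑' p : ℕ × ℕ × ℕ,
        if p.1 < p.2.1 then
          ((p.1 + p.2.2).choose p.1 : ℝ≥0∞) * x ^ (p.1 + p.2.1 + p.2.2)
        else 0)
        = ∑' (a : ℕ) (b : ℕ) (c : ℕ), if a < b then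
            ((a + c).choose a : ℝ≥0∞) * x ^ (a + b + c) else 0 := by
          rw [ENNReal.tsum_prod']
          exact tsum_congr (fun a => ENNReal.tsum_prod')
      _ = ∑' (a : ℕ) (b : ℕ), if a < b then x ^ (a + b) * ENNReal.ofReal ((1/(1-α)) ^ (a + 1)) else 0 := by
          congr 1; funext a; congr 1; funext b
          by_cases hab : a < b
          · simp only [hab, if_true]; exact hcsum a b
          · simp [hab]
      _ = ∑' (b : ℕ) (a : ℕ), if a < b then x ^ (a + b) * ENNReal.ofReal ((1/(1-α)) ^ (a + 1)) else 0 :=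
          ENNReal.tsum_comm
      _ = ∑' (b : ℕ), ENNReal.ofReal ((1/(2*α-1)) * ((α^2/(1-α))^b - α^b)) := by
          refine tsum_congr (fun b => ?_)
          rw [tsum_eq_sum (s := Finset.range b)
            (fun a ha => by simp [Finset.mem_range, not_lt] at ha; simp [Nat.not_lt.mpr ha])]
          rw [← hreal b, ENNReal.ofReal_sum_of_nonneg (fun a _ => by positivity)]
          refine Finset.sum_congr rfl (fun a ha => ?_)
          rw [if_pos (Finset.mem_range.mp ha), ENNReal.ofReal_mul (by positivity),
            ENNReal.ofReal_pow hα0.le]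
      _ = ∑' (b : ℕ), ENNReal.ofReal (1/(2*α-1)) * (q ^ b - x ^ b) := by
          refine tsum_congr (fun b => ?_)
          rw [ENNReal.ofReal_mul (by positivity), ENNReal.ofReal_sub _ (by positivity),
            ENNReal.ofReal_pow (by positivity), ENNReal.ofReal_pow hα0.le]
      _ = ENNReal.ofReal (1/(2*α-1)) * ∑' (b : ℕ), (q ^ b - x ^ b) :=
          ENNReal.tsum_mul_left
      _ = ENNReal.ofReal (1/(2*α-1)) * ∑' (b : ℕ), (q ^ (b+1) - x ^ (b+1)) := by
          congr 1
          rw [tsum_eq_zero_add' ENNReal.summable]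
          simp
  refine ⟨key, ?_⟩
  rw [key]
  have hc0 : ENNReal.ofReal (1/(2*α-1)) ≠ 0 :=
    (ENNReal.ofReal_pos.mpr (by positivity)).ne'
  have hcT : ENNReal.ofReal (1/(2*α-1)) ≠ ⊤ := ENNReal.ofReal_ne_top
  rw [ENNReal.mul_eq_top]
  simp only [hc0, hcT, ne_eq, not_false_eq_true, false_and, or_false, true_and]
  -- now: ∑' b, (q^(b+1) - x^(b+1)) = ⊤ ↔ (√5-1)/2 ≤ α
  have hiff1 : (∑' b : ℕ, (q ^ (b+1) - x ^ (b+1))) = ⊤ ↔ 1 ≤ α^2/(1-α) := by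
    constructor
    · intro hT
      by_contra hβ
      push_neg at hβ
      have hq1 : q < 1 := ENNReal.ofReal_lt_one.mpr hβ
      have hle : (∑' b : ℕ, (q ^ (b+1) - x ^ (b+1))) ≤ ∑' b : ℕ, q ^ b := by
        refine ENNReal.tsum_le_tsum (fun b => ?_)
        exact le_trans tsub_le_self (pow_le_pow_of_le_one zero_le hq1.le (Nat.le_succ b))
      rw [ENNReal.tsum_geometric] at hle
      have : (1 - q)⁻¹ ≠ ⊤ := by
        rw [ENNReal.inv_ne_top]
        exact (tsub_pos_of_lt hq1).ne'
      exact this (top_le_iff.mp (hT ▸ hle))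
    · intro hβ
      have hq1 : 1 ≤ q := ENNReal.one_le_ofReal.mpr hβ
      have hx10 : (1:ℝ≥0∞) - x ≠ 0 := (tsub_pos_of_lt hx1).ne'
      refine top_le_iff.mp ?_
      calc (⊤:ℝ≥0∞) = ∑' _ : ℕ, ((1:ℝ≥0∞) - x) := (ENNReal.tsum_const_eq_top_of_ne_zero hx10).symm
        _ ≤ ∑' b : ℕ, (q ^ (b+1) - x ^ (b+1)) := by
            refine ENNReal.tsum_le_tsum (fun b => ?_)
            exact tsub_le_tsub (one_le_pow_of_one_le' hq1 (b+1))
              (pow_le_of_le_one zero_le hx1.le (Nat.succ_ne_zero b))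
  rw [hiff1]
  have h5 : Real.sqrt 5 ^ 2 = 5 := Real.sq_sqrt (by norm_num)
  have h5' : 0 ≤ Real.sqrt 5 := Real.sqrt_nonneg 5
  rw [le_div_iff₀ h1α, one_mul]
  constructor
  · intro h; nlinarith [sq_nonneg (2*α + 1 - Real.sqrt 5)]
  · intro h
    have h' : Real.sqrt 5 ≤ 2*α+1 := by linarith
    have := mul_self_le_mul_self h5' h'
    rw [Real.mul_self_sqrt (by norm_num)] at this
    nlinarith
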